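/- Let X₁,…,Xₙ be i.i.d. uniform on {0,1}, Y ∈ {0,1}, and suppose H(Xᵢ | X_{[n]∖{i}}, Y) = 0 for all i. Then Y is almost surely equal to a function f of (X₁,…,Xₙ), and this f satisfies f(x₁,…,xₙ) = 1 − f(1−x₁, x₂,…,xₙ) for all x ∈ {0,1}ⁿ. -/

import Mathlib

open MeasureTheory ENNReal

/-- Shannon entropy (in nats) of a finitely-valued random variable. -/
noncomputable def ent {Ω α : Type*} [MeasurableSpace Ω] [Fintype α]
    (μ : Measure Ω) (X : Ω → α) : ℝ :=
  ∑ a : α, Real.negMulLog ((μ (X ⁻¹' {a})).toReal)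

/-- Conditional Shannon entropy H(X | Y) = H(X, Y) - H(Y). -/
noncomputable def condEnt {Ω α β : Type*} [MeasurableSpace Ω] [Fintype α] [Fintype β]
    (μ : Measure Ω) (X : Ω → α) (Y : Ω → β) : ℝ :=
  ent μ (fun ω => (X ω, Y ω)) - ent μ Y


lemma zmod2_cases (a : ZMod 2) : a = 0 ∨ a = 1 := by revert a; decide

lemma zmod2_eq_of_ne {a b : ZMod 2} (h : a ≠ b) : a = 1 + b := by revert a b; decide

lemma sum_zmod2 {M : Type*} [AddCommMonoid M] (g : ZMod 2 → M) : ∑ a, g a = g 0 + g 1 := by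
  rw [show (Finset.univ : Finset (ZMod 2)) = {0, 1} from by decide,
    Finset.sum_insert (by decide), Finset.sum_singleton]

lemma mul_neg_log_le {p q : ℝ} (hp : 0 ≤ p) (hpq : p ≤ q) :
    p * (-Real.log q) ≤ Real.negMulLog p := by
  rcases hp.eq_or_lt with h | h
  · simp [← h, Real.negMulLog]
  · rw [Real.negMulLog, neg_mul_comm]
    exact mul_le_mul_of_nonneg_left (neg_le_neg (Real.log_le_log h hpq)) hp

lemma aux_nonneg {p0 p1 q : ℝ} (h0 : 0 ≤ p0) (h1 : 0 ≤ p1)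
    (hq0 : p0 ≤ q) (hq1 : p1 ≤ q) (hqs : q ≤ p0 + p1) (hq : q ≤ 1) :
    Real.negMulLog q ≤ Real.negMulLog p0 + Real.negMulLog p1 := by
  have hq' : 0 ≤ q := h0.trans hq0
  calc Real.negMulLog q = q * (-Real.log q) := by rw [Real.negMulLog, neg_mul_comm]
    _ ≤ (p0 + p1) * (-Real.log q) :=
        mul_le_mul_of_nonneg_right hqs (neg_nonneg.2 (Real.log_nonpos hq' hq))
    _ = p0 * (-Real.log q) + p1 * (-Real.log q) := by ring
    _ ≤ _ := add_le_add (mul_neg_log_le h0 hq0) (mul_neg_log_le h1 hq1)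

lemma aux_pos {p0 p1 q : ℝ} (h0 : 0 < p0) (h1 : 0 < p1)
    (hq0 : p0 ≤ q) (hq1 : p1 ≤ q) (hqs : q ≤ p0 + p1) (hq : q ≤ 1) (hp01 : p0 < 1) :
    Real.negMulLog q < Real.negMulLog p0 + Real.negMulLog p1 := by
  have hqpos : 0 < q := h0.trans_le hq0
  rcases hq0.lt_or_eq with h | h
  · have hstrict : p0 * (-Real.log q) < Real.negMulLog p0 := by
      rw [Real.negMulLog, neg_mul_comm]
      exact mul_lt_mul_of_pos_left (neg_lt_neg (Real.log_lt_log h0 h)) h0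
    have h2 : p1 * (-Real.log q) ≤ Real.negMulLog p1 := mul_neg_log_le h1.le hq1
    calc Real.negMulLog q = q * (-Real.log q) := by rw [Real.negMulLog, neg_mul_comm]
      _ ≤ (p0 + p1) * (-Real.log q) :=
          mul_le_mul_of_nonneg_right hqs (neg_nonneg.2 (Real.log_nonpos hqpos.le hq))
      _ = p0 * (-Real.log q) + p1 * (-Real.log q) := by ring
      _ < _ := by linarith
  · have hq1' : q < 1 := by rw [← h]; exact hp01
    have hlog : 0 < -Real.log q := neg_pos.2 (Real.log_neg hqpos hq1')
    calc Real.negMulLog q = q * (-Real.log q) := by rw [Real.negMulLog, neg_mul_comm]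
      _ < (p0 + p1) * (-Real.log q) := by
          apply mul_lt_mul_of_pos_right _ hlog
          rw [← h]; linarith
      _ = p0 * (-Real.log q) + p1 * (-Real.log q) := by ring
      _ ≤ _ := add_le_add (mul_neg_log_le h0.le hq0) (mul_neg_log_le h1.le hq1)


/-- under the XOR-checker hypotheses, `Y` is a.s. a function `f` of
`(X₁,…,Xₙ)`, and `f` flips its value when the first coordinate is flipped. -/
theorem stmt1 {Ω : Type*} [MeasurableSpace Ω] (μ : Measure Ω) [IsProbabilityMeasure μ]
    (n : ℕ) (hn : 0 < n) (X : Ω → Fin n → ZMod 2) (Y : Ω → ZMod 2)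
    (hX : ∀ x : Fin n → ZMod 2, μ (X ⁻¹' {x}) = (2 : ℝ≥0∞)⁻¹ ^ n)
    (hH : ∀ i : Fin n,
        condEnt μ (fun ω => X ω i)
          (fun ω => ((fun j : {j : Fin n // j ≠ i} => X ω j.1), Y ω)) = 0) :
    ∃ f : (Fin n → ZMod 2) → ZMod 2,
      (∀ᵐ ω ∂μ, Y ω = f (X ω)) ∧
      (∀ x : Fin n → ZMod 2,
        f x = 1 + f (Function.update x ⟨0, hn⟩ (1 + x ⟨0, hn⟩))) := by
  classical
  set i : Fin n := ⟨0, hn⟩ with hidef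
  have hXne : ∀ x, μ (X ⁻¹' {x}) ≠ 0 := fun x => by
    rw [hX]; exact pow_ne_zero _ (by simp)
  -- the pair map and the conditioning map
  set W : Ω → ZMod 2 × (({j : Fin n // j ≠ i} → ZMod 2) × ZMod 2) :=
    fun ω => (X ω i, ((fun j : {j : Fin n // j ≠ i} => X ω j.1), Y ω)) with hW
  set Zf : Ω → (({j : Fin n // j ≠ i} → ZMod 2) × ZMod 2) :=
    fun ω => ((fun j : {j : Fin n // j ≠ i} => X ω j.1), Y ω) with hZf
  -- step 1 : zero conditional entropy forces determinism per fiber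
  have key2 : ∀ z, μ (W ⁻¹' {((0 : ZMod 2), z)}) = 0 ∨ μ (W ⁻¹' {((1 : ZMod 2), z)}) = 0 := by
    intro z
    by_contra hcon
    push_neg at hcon
    obtain ⟨hc0, hc1⟩ := hcon
    have hH0 := hH i
    rw [condEnt, ent, ent] at hH0
    have hsplit : (∑ a : ZMod 2 × (({j : Fin n // j ≠ i} → ZMod 2) × ZMod 2),
        Real.negMulLog ((μ ((fun ω => ((X ω i), Zf ω)) ⁻¹' {a})).toReal))
        = ∑ z', (Real.negMulLog ((μ (W ⁻¹' {((0:ZMod 2), z')})).toReal)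
            + Real.negMulLog ((μ (W ⁻¹' {((1:ZMod 2), z')})).toReal)) := by
      rw [Fintype.sum_prod_type, sum_zmod2]
      rw [← Finset.sum_add_distrib]
    rw [hsplit] at hH0
    rw [← Finset.sum_sub_distrib] at hH0
    -- termwise nonneg
    have hterm : ∀ z', 0 ≤ Real.negMulLog ((μ (W ⁻¹' {((0:ZMod 2), z')})).toReal)
        + Real.negMulLog ((μ (W ⁻¹' {((1:ZMod 2), z')})).toReal)
        - Real.negMulLog ((μ (Zf ⁻¹' {z'})).toReal) := by
      intro z'
      have hsub0 : W ⁻¹' {((0:ZMod 2), z')} ⊆ Zf ⁻¹' {z'} := by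
        intro ω hω; simp only [Set.mem_preimage, Set.mem_singleton_iff, hW, Prod.ext_iff] at hω ⊢
        exact hω.2
      have hsub1 : W ⁻¹' {((1:ZMod 2), z')} ⊆ Zf ⁻¹' {z'} := by
        intro ω hω; simp only [Set.mem_preimage, Set.mem_singleton_iff, hW, Prod.ext_iff] at hω ⊢
        exact hω.2
      have hsubU : Zf ⁻¹' {z'} ⊆ W ⁻¹' {((0:ZMod 2), z')} ∪ W ⁻¹' {((1:ZMod 2), z')} := by
        intro ω hω
        simp only [Set.mem_preimage, Set.mem_union, Set.mem_singleton_iff, hW, Prod.ext_iff] at hω ⊢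
        rcases zmod2_cases (X ω i) with h | h
        · exact Or.inl ⟨h, hω⟩
        · exact Or.inr ⟨h, hω⟩
      have hfin : ∀ s : Set Ω, μ s ≠ ⊤ := fun s => measure_ne_top μ s
      apply sub_nonneg.2
      apply aux_nonneg ENNReal.toReal_nonneg ENNReal.toReal_nonneg
      · exact ENNReal.toReal_mono (hfin _) (measure_mono hsub0)
      · exact ENNReal.toReal_mono (hfin _) (measure_mono hsub1)
      · have h1 : μ (Zf ⁻¹' {z'}) ≤ μ (W ⁻¹' {((0:ZMod 2), z')}) + μ (W ⁻¹' {((1:ZMod 2), z')}) :=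
          (measure_mono hsubU).trans (measure_union_le (μ := μ) _ _)
        calc (μ (Zf ⁻¹' {z'})).toReal
            ≤ (μ (W ⁻¹' {((0:ZMod 2), z')}) + μ (W ⁻¹' {((1:ZMod 2), z')})).toReal :=
              ENNReal.toReal_mono (by rw [ENNReal.add_ne_top]; exact ⟨hfin _, hfin _⟩) h1
          _ = _ := ENNReal.toReal_add (hfin _) (hfin _)
      · calc (μ (Zf ⁻¹' {z'})).toReal ≤ (1 : ℝ≥0∞).toReal :=
              ENNReal.toReal_mono one_ne_top prob_le_one
          _ = 1 := ENNReal.toReal_one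
    -- sum of nonneg terms equals 0 hence each is 0
    have hzero : ∀ z' ∈ Finset.univ, Real.negMulLog ((μ (W ⁻¹' {((0:ZMod 2), z')})).toReal)
        + Real.negMulLog ((μ (W ⁻¹' {((1:ZMod 2), z')})).toReal)
        - Real.negMulLog ((μ (Zf ⁻¹' {z'})).toReal) = 0 := by
      rw [← Finset.sum_eq_zero_iff_of_nonneg (fun z' _ => hterm z')]
      exact hH0
    have hz := hzero z (Finset.mem_univ z)
    -- strict inequality in the bad case
    have hsub0 : W ⁻¹' {((0:ZMod 2), z)} ⊆ Zf ⁻¹' {z} := by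
      intro ω hω; simp only [Set.mem_preimage, Set.mem_singleton_iff, hW, Prod.ext_iff] at hω ⊢
      exact hω.2
    have hsub1 : W ⁻¹' {((1:ZMod 2), z)} ⊆ Zf ⁻¹' {z} := by
      intro ω hω; simp only [Set.mem_preimage, Set.mem_singleton_iff, hW, Prod.ext_iff] at hω ⊢
      exact hω.2
    have hsubU : Zf ⁻¹' {z} ⊆ W ⁻¹' {((0:ZMod 2), z)} ∪ W ⁻¹' {((1:ZMod 2), z)} := by
      intro ω hω
      simp only [Set.mem_preimage, Set.mem_union, Set.mem_singleton_iff, hW, Prod.ext_iff] at hω ⊢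
      rcases zmod2_cases (X ω i) with h | h
      · exact Or.inl ⟨h, hω⟩
      · exact Or.inr ⟨h, hω⟩
    have hfin : ∀ s : Set Ω, μ s ≠ ⊤ := fun s => measure_ne_top μ s
    -- p0 < 1 : bound by the uniform probability
    have hsubX : W ⁻¹' {((0:ZMod 2), z)} ⊆
        X ⁻¹' {fun j => if h : j = i then 0 else z.1 ⟨j, h⟩} := by
      intro ω hω
      simp only [Set.mem_preimage, Set.mem_singleton_iff, hW, Prod.ext_iff] at hω
      obtain ⟨h1, h2, h3⟩ := hω
      simp only [Set.mem_preimage, Set.mem_singleton_iff]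
      funext j
      by_cases hj : j = i
      · subst hj; simp [h1]
      · simp only [hj, dif_neg, not_false_iff]
        exact congrFun h2 ⟨j, hj⟩
    have hp0lt : (μ (W ⁻¹' {((0:ZMod 2), z)})).toReal < 1 := by
      have h1 : (μ (W ⁻¹' {((0:ZMod 2), z)})).toReal
          ≤ (μ (X ⁻¹' {fun j => if h : j = i then 0 else z.1 ⟨j, h⟩})).toReal :=
        ENNReal.toReal_mono (hfin _) (measure_mono hsubX)
      rw [hX] at h1
      have h2 : (((2:ℝ≥0∞)⁻¹ ^ n).toReal) = ((2:ℝ)⁻¹) ^ n := by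
        simp [ENNReal.toReal_pow]
      rw [h2] at h1
      exact lt_of_le_of_lt h1 (pow_lt_one₀ (by norm_num) (by norm_num) hn.ne')
    have hpos0 : 0 < (μ (W ⁻¹' {((0:ZMod 2), z)})).toReal :=
      ENNReal.toReal_pos hc0 (hfin _)
    have hpos1 : 0 < (μ (W ⁻¹' {((1:ZMod 2), z)})).toReal :=
      ENNReal.toReal_pos hc1 (hfin _)
    have hstrict := aux_pos hpos0 hpos1
      (ENNReal.toReal_mono (hfin _) (measure_mono hsub0))
      (ENNReal.toReal_mono (hfin _) (measure_mono hsub1))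
      (by
        have h1 : μ (Zf ⁻¹' {z}) ≤ μ (W ⁻¹' {((0:ZMod 2), z)}) + μ (W ⁻¹' {((1:ZMod 2), z)}) :=
          (measure_mono hsubU).trans (measure_union_le (μ := μ) _ _)
        calc (μ (Zf ⁻¹' {z})).toReal
            ≤ (μ (W ⁻¹' {((0:ZMod 2), z)}) + μ (W ⁻¹' {((1:ZMod 2), z)})).toReal :=
              ENNReal.toReal_mono (by rw [ENNReal.add_ne_top]; exact ⟨hfin _, hfin _⟩) h1
          _ = _ := ENNReal.toReal_add (hfin _) (hfin _))
      (by
        calc (μ (Zf ⁻¹' {z})).toReal ≤ (1 : ℝ≥0∞).toReal :=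
              ENNReal.toReal_mono one_ne_top prob_le_one
          _ = 1 := ENNReal.toReal_one)
      hp0lt
    linarith
  -- step 2 : translate to statements about P x y := μ (X⁻¹{x} ∩ Y⁻¹{y})
  have hWset : ∀ (x : Fin n → ZMod 2) (y : ZMod 2),
      W ⁻¹' {(x i, ((fun j : {j : Fin n // j ≠ i} => x j.1), y))} = X ⁻¹' {x} ∩ Y ⁻¹' {y} := by
    intro x y
    ext ω
    simp only [Set.mem_preimage, Set.mem_singleton_iff, hW, Prod.ext_iff, Set.mem_inter_iff]
    constructor
    · rintro ⟨h1, h2, h3⟩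
      refine ⟨?_, h3⟩
      funext j
      by_cases hj : j = i
      · subst hj; exact h1
      · exact congrFun h2 ⟨j, hj⟩
    · rintro ⟨h1, h2⟩
      subst h1
      exact ⟨rfl, rfl, h2⟩
  have key : ∀ (x : Fin n → ZMod 2) (y : ZMod 2),
      μ (X ⁻¹' {x} ∩ Y ⁻¹' {y}) = 0 ∨
      μ (X ⁻¹' {Function.update x i (1 + x i)} ∩ Y ⁻¹' {y}) = 0 := by
    intro x y
    set x' := Function.update x i (1 + x i) with hx'
    set z : ({j : Fin n // j ≠ i} → ZMod 2) × ZMod 2 :=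
      ((fun j : {j : Fin n // j ≠ i} => x j.1), y) with hz
    have hres : (fun j : {j : Fin n // j ≠ i} => x' j.1) = fun j : {j : Fin n // j ≠ i} => x j.1 := by
      funext j
      exact Function.update_of_ne j.2 _ _
    have e1 : W ⁻¹' {(x i, z)} = X ⁻¹' {x} ∩ Y ⁻¹' {y} := hWset x y
    have e2 : W ⁻¹' {(1 + x i, z)} = X ⁻¹' {x'} ∩ Y ⁻¹' {y} := by
      have := hWset x' y
      rw [hres] at this
      rw [show x' i = 1 + x i from Function.update_self _ _ _] at this
      exact this
    rcases zmod2_cases (x i) with h | h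
    · rcases key2 z with hk | hk
      · left; rw [← e1, h]; exact hk
      · right; rw [← e2, h]; simpa using hk
    · rcases key2 z with hk | hk
      · right; rw [← e2, h]; simpa [show (1 + 1 : ZMod 2) = 0 from by decide] using hk
      · left; rw [← e1, h]; exact hk
  -- existence of a value of Y on each fiber of X
  have hex : ∀ x : Fin n → ZMod 2,
      μ (X ⁻¹' {x} ∩ Y ⁻¹' {(0:ZMod 2)}) ≠ 0 ∨ μ (X ⁻¹' {x} ∩ Y ⁻¹' {(1:ZMod 2)}) ≠ 0 := by
    intro x
    by_contra hcon
    push_neg at hcon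
    obtain ⟨h0, h1⟩ := hcon
    have hsub : X ⁻¹' {x} ⊆ (X ⁻¹' {x} ∩ Y ⁻¹' {(0:ZMod 2)}) ∪ (X ⁻¹' {x} ∩ Y ⁻¹' {(1:ZMod 2)}) := by
      intro ω hω
      rcases zmod2_cases (Y ω) with h | h
      · exact Or.inl ⟨hω, h⟩
      · exact Or.inr ⟨hω, h⟩
    have : μ (X ⁻¹' {x}) = 0 := by
      have := (measure_mono hsub).trans (measure_union_le (μ := μ) _ _)
      rw [h0, h1, add_zero] at this
      exact le_antisymm this zero_le
    exact hXne x this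
  -- define f
  set f : (Fin n → ZMod 2) → ZMod 2 :=
    fun x => if μ (X ⁻¹' {x} ∩ Y ⁻¹' {(0:ZMod 2)}) = 0 then 1 else 0 with hf
  have hfne : ∀ x, μ (X ⁻¹' {x} ∩ Y ⁻¹' {f x}) ≠ 0 := by
    intro x
    rw [hf]
    by_cases h : μ (X ⁻¹' {x} ∩ Y ⁻¹' {(0:ZMod 2)}) = 0
    · simp only [h, if_true]
      rcases hex x with h' | h'
      · exact absurd h h'
      · exact h'
    · simp only [h, if_false]
      exact h
  have hfzero : ∀ x, μ (X ⁻¹' {x} ∩ Y ⁻¹' {1 + f x}) = 0 := by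
    intro x
    rw [hf]
    by_cases h : μ (X ⁻¹' {x} ∩ Y ⁻¹' {(0:ZMod 2)}) = 0
    · simp only [h, if_true]
      simpa [show (1 + 1 : ZMod 2) = 0 from by decide] using h
    · simp only [h, if_false]
      -- need μ (X⁻¹{x} ∩ Y⁻¹{1}) = 0
      by_contra h1
      simp only [show (1 + 0 : ZMod 2) = 1 from by decide] at h1
      set x' := Function.update x i (1 + x i) with hx'
      have hyall : ∀ y : ZMod 2, μ (X ⁻¹' {x} ∩ Y ⁻¹' {y}) ≠ 0 := by
        intro y
        rcases zmod2_cases y with hy | hy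
        · rw [hy]; exact h
        · rw [hy]; exact h1
      rcases hex x' with h' | h'
      · rcases key x 0 with hk | hk
        · exact hyall 0 hk
        · exact h' hk
      · rcases key x 1 with hk | hk
        · exact hyall 1 hk
        · exact h' hk
  refine ⟨f, ?_, ?_⟩
  · rw [ae_iff]
    have hsub : {ω | ¬ Y ω = f (X ω)} ⊆
        ⋃ x : Fin n → ZMod 2, (X ⁻¹' {x} ∩ Y ⁻¹' {1 + f x}) := by
      intro ω hω
      simp only [Set.mem_setOf_eq] at hω
      refine Set.mem_iUnion.2 ⟨X ω, ?_, ?_⟩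
      · rfl
      · exact zmod2_eq_of_ne hω
    refine le_antisymm ?_ zero_le
    calc μ {ω | ¬ Y ω = f (X ω)} ≤ μ (⋃ x : Fin n → ZMod 2, (X ⁻¹' {x} ∩ Y ⁻¹' {1 + f x})) :=
          measure_mono hsub
      _ ≤ ∑' x : Fin n → ZMod 2, μ (X ⁻¹' {x} ∩ Y ⁻¹' {1 + f x}) := measure_iUnion_le _
      _ = 0 := by simp only [hfzero, tsum_zero]
  · intro x
    set x' := Function.update x i (1 + x i) with hx'
    have h1 := hfne x
    have h2 := hfne x'
    rcases key x (f x') with hk | hk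
    · have hne : f x ≠ f x' := by
        intro heq
        rw [heq] at h1
        exact h1 hk
      exact zmod2_eq_of_ne hne
    · exact absurd hk h2
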